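/- arXiv:1805.03611 — 2 statements merged into one kernel-verified Lean document; each statement's English description precedes it below -/
import Mathlib

section
/- Let A be an abelian group and let M be a finitely generated additive submonoid of A. Let B denote the subgroup of A generated by M in A, and define the saturation M^sat := {a ∈ B : there exists an integer n ≥ 1 with n·a ∈ M}. Then M^sat is a finitely generated submonoid of A. -/
open Finset DirectSum

-- finiteness of the "bounded" set in a f.g. abelian group
lemma aux_finite (G : Type*) [AddCommGroup G] [AddGroup.FG G] {k : ℕ} (w : Fin k → G) :
    {g : G | ∃ n : ℕ, 1 ≤ n ∧ ∃ c : Fin k → ℕ, (∀ i, c i ≤ n) ∧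
      n • g = ∑ i, c i • w i}.Finite := by
  classical
  obtain ⟨d, ι, fι, p, hp, e, ⟨f⟩⟩ := AddCommGroup.equiv_free_prod_directSum_zmod G
  haveI h0 : ∀ i : ι, NeZero (p i ^ e i) := fun i => ⟨pow_ne_zero _ (hp i).ne_zero⟩
  haveI : Finite (⨁ i, ZMod (p i ^ e i)) :=
    Finite.of_injective (fun x : ⨁ i, ZMod (p i ^ e i) => (x : ∀ i, ZMod (p i ^ e i)))
      DFunLike.coe_injective
  set R : Fin d → ℤ := fun j => ∑ i, |((f (w i)).1 : Fin d → ℤ) j| with hR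
  set F : Set ((Fin d →₀ ℤ) × ⨁ i, ZMod (p i ^ e i)) :=
    {x : Fin d →₀ ℤ | ∀ j, |x j| ≤ R j} ×ˢ Set.univ with hF
  have hFfin : F.Finite := by
    apply Set.Finite.prod _ Set.finite_univ
    have h1 : {x : Fin d →₀ ℤ | ∀ j, |x j| ≤ R j} =
        (⇑) ⁻¹' {v : Fin d → ℤ | ∀ j, |v j| ≤ R j} := rfl
    rw [h1]
    apply Set.Finite.preimage (Set.injOn_of_injective (DFunLike.coe_injective (F := Fin d →₀ ℤ)))
    apply Set.Finite.subset (Set.Finite.pi (fun j => Set.finite_Icc (-(R j)) (R j)))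
    intro v hv
    simp only [Set.mem_pi, Set.mem_univ, Set.mem_Icc, forall_true_left]
    exact fun j => abs_le.mp (hv j)
  apply Set.Finite.subset (Set.Finite.preimage (Set.injOn_of_injective f.injective) hFfin)
  rintro g ⟨n, hn, c, hc, hsum⟩
  simp only [Set.mem_preimage, hF, Set.mem_prod, Set.mem_univ, and_true, Set.mem_setOf_eq]
  intro j
  have h2 : n • (f g).1 = ∑ i, c i • (f (w i)).1 := by
    have := congrArg (fun x => (f x).1) hsum
    simpa [map_nsmul, map_sum, Prod.fst_sum] using this
  have h3 : (n : ℤ) * (f g).1 j = ∑ i, (c i : ℤ) * ((f (w i)).1 : Fin d → ℤ) j := by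
    have := congrArg (fun x : Fin d →₀ ℤ => x j) h2
    simpa [Finsupp.finset_sum_apply, nsmul_eq_mul] using this
  have hb : (n : ℤ) * |(f g).1 j| ≤ (n : ℤ) * R j := by
    have habs : (n : ℤ) * |(f g).1 j| = |(n : ℤ) * (f g).1 j| := by
      rw [abs_mul, abs_of_nonneg (by positivity : (0:ℤ) ≤ (n:ℤ))]
    rw [habs, h3]
    calc |∑ i, (c i : ℤ) * ((f (w i)).1 : Fin d → ℤ) j|
        ≤ ∑ i, |(c i : ℤ) * ((f (w i)).1 : Fin d → ℤ) j| := Finset.abs_sum_le_sum_abs _ _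
      _ ≤ ∑ i, (n : ℤ) * |((f (w i)).1 : Fin d → ℤ) j| := by
          apply Finset.sum_le_sum
          intro i _
          rw [abs_mul, abs_of_nonneg (by positivity : (0:ℤ) ≤ (c i : ℤ))]
          exact mul_le_mul_of_nonneg_right (by exact_mod_cast hc i) (abs_nonneg _)
      _ = (n : ℤ) * R j := by rw [Finset.mul_sum]
  exact le_of_mul_le_mul_left hb (Int.natCast_pos.mpr hn)


/-- Gordon's lemma: if `M` is a finitely generated submonoid of an abelian group `A`,
`B` is the subgroup of `A` generated by `M`, and
`M^sat = {a ∈ B : n • a ∈ M for some integer n ≥ 1}`, then `M^sat` is a finitely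
generated submonoid of `A`. -/
theorem stmt_4 {A : Type*} [AddCommGroup A] (M : AddSubmonoid A) (hM : M.FG) :
    ∃ N : AddSubmonoid A,
      (N : Set A) =
        {a : A | a ∈ AddSubgroup.closure (M : Set A) ∧ ∃ n : ℕ, 1 ≤ n ∧ n • a ∈ M} ∧
      N.FG := by
  classical
  set B := AddSubgroup.closure (M : Set A) with hB
  refine ⟨{ carrier := {a : A | a ∈ B ∧ ∃ n : ℕ, 1 ≤ n ∧ n • a ∈ M},
            zero_mem' := ⟨zero_mem _, 1, le_refl 1, by simpa using M.zero_mem⟩,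
            add_mem' := ?_ }, rfl, ?_⟩
  · rintro a b ⟨haB, n, hn, hna⟩ ⟨hbB, m', hm', hmb⟩
    refine ⟨add_mem haB hbB, n * m', Nat.one_le_iff_ne_zero.mpr (by positivity), ?_⟩
    rw [smul_add]
    have h1 : (n * m') • a = m' • (n • a) := by rw [mul_comm, mul_smul]
    have h2 : (n * m') • b = n • (m' • b) := by rw [mul_smul]
    rw [h1, h2]
    exact add_mem (AddSubmonoid.nsmul_mem M hna m') (AddSubmonoid.nsmul_mem M hmb n)
  -- FG part
  obtain ⟨s, hs⟩ := hM
  -- enumerate generators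
  set k := s.card with hk
  set m : Fin k → A := fun i => ((s.equivFin.symm i : s) : A) with hmdef
  have hrange : Set.range m = (s : Set A) := by
    ext x
    constructor
    · rintro ⟨i, rfl⟩; exact (s.equivFin.symm i).2
    · intro hx; exact ⟨s.equivFin ⟨x, hx⟩, by simp [hmdef]⟩
  have hmM : ∀ i, m i ∈ M := fun i => by
    rw [← hs]; exact AddSubmonoid.subset_closure (by rw [← hrange]; exact ⟨i, rfl⟩)
  have hMB : ∀ x, x ∈ M → x ∈ B := fun x hx => AddSubgroup.subset_closure hx
  have hmB : ∀ i, m i ∈ B := fun i => hMB _ (hmM i)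
  -- membership in M as ℕ-combinations
  have hMspan : ∀ x, x ∈ M ↔ ∃ c : Fin k → ℕ, ∑ i, c i • m i = x := by
    intro x
    have h1 : M = AddSubmonoid.closure (Set.range m) := by rw [hrange, hs]
    rw [h1, ← Submodule.span_nat_eq_addSubmonoidClosure, Submodule.mem_toAddSubmonoid,
      Submodule.mem_span_range_iff_exists_fun]
  -- B is a finitely generated group
  have hBfg : B.FG := by
    have hBs : B = AddSubgroup.closure (s : Set A) := by
      apply le_antisymm
      · rw [hB, AddSubgroup.closure_le]
        intro x hx
        have : M ≤ (AddSubgroup.closure (s : Set A)).toAddSubmonoid := by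
          rw [← hs]
          exact AddSubmonoid.closure_le.mpr (fun y hy => AddSubgroup.subset_closure hy)
        exact this hx
      · rw [hB, AddSubgroup.closure_le]
        intro x hx
        exact AddSubgroup.subset_closure ((hs ▸ AddSubmonoid.subset_closure hx : x ∈ M))
    exact ⟨s, hBs.symm⟩
  haveI : AddGroup.FG B := (AddGroup.fg_iff_addSubgroup_fg B).mpr hBfg
  -- generators inside B
  set w : Fin k → B := fun i => ⟨m i, hmB i⟩ with hw
  -- the finite set D
  have hD'fin := aux_finite B w
  set D' := {g : B | ∃ n : ℕ, 1 ≤ n ∧ ∃ c : Fin k → ℕ, (∀ i, c i ≤ n) ∧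
      n • g = ∑ i, c i • w i} with hD'
  set D : Set A := Subtype.val '' D' with hDdef
  have hDfin : D.Finite := Set.Finite.image _ hD'fin
  rw [AddSubmonoid.fg_iff]
  refine ⟨(s : Set A) ∪ D, ?_, (s.finite_toSet).union hDfin⟩
  apply le_antisymm
  · -- closure ≤ N
    rw [AddSubmonoid.closure_le]
    rintro x (hx | hx)
    · have hxM : x ∈ M := hs ▸ AddSubmonoid.subset_closure hx
      exact ⟨hMB x hxM, 1, le_refl 1, by simpa using hxM⟩
    · obtain ⟨g, ⟨n, hn, c, _, hsum⟩, rfl⟩ := hx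
      refine ⟨g.2, n, hn, ?_⟩
      have : (n • g : A) = ∑ i, c i • m i := by
        have := congrArg (Subtype.val) hsum
        simpa [hw] using this
      rw [← AddSubgroup.coe_nsmul] at this ⊢
      rw [this]
      exact (hMspan _).mpr ⟨c, rfl⟩
  · -- N ≤ closure
    rintro a ⟨haB, n, hn, hna⟩
    obtain ⟨c, hc⟩ := (hMspan _).mp hna
    set q : Fin k → ℕ := fun i => c i / n with hq
    set t : A := ∑ i, q i • m i with ht
    have htB : t ∈ B := sum_mem (fun i _ => AddSubgroup.nsmul_mem B (hmB i) (q i))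
    have hdB : a - t ∈ B := sub_mem haB htB
    have hkey : n • (a - t) = ∑ i, (c i % n) • m i := by
      rw [smul_sub, ht, Finset.smul_sum]
      have h1 : ∀ i ∈ Finset.univ, n • (q i • m i) = (n * q i) • m i :=
        fun i _ => by rw [← mul_smul]
      rw [Finset.sum_congr rfl h1, ← hc]
      have h2 : ∀ i ∈ Finset.univ, c i • m i = (n * q i) • m i + (c i % n) • m i := by
        intro i _
        rw [← add_nsmul, hq, Nat.div_add_mod]
      rw [Finset.sum_congr rfl h2, Finset.sum_add_distrib, add_sub_cancel_left]
    have hdD : a - t ∈ D := by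
      refine ⟨⟨a - t, hdB⟩, ⟨n, hn, fun i => c i % n, fun i => le_of_lt (Nat.mod_lt _ hn), ?_⟩, rfl⟩
      apply Subtype.ext
      rw [AddSubgroup.coe_nsmul]
      have : ((∑ i, (c i % n) • w i : B) : A) = ∑ i, (c i % n) • m i := by
        simp [hw]
      rw [this]
      exact hkey
    have hteq : a = t + (a - t) := by abel
    rw [hteq]
    apply add_mem
    · apply sum_mem
      intro i _
      apply AddSubmonoid.nsmul_mem
      apply AddSubmonoid.subset_closure
      exact Or.inl (by rw [← hrange]; exact ⟨i, rfl⟩)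
    · exact AddSubmonoid.subset_closure (Or.inr hdD)
end

section
/- Let K be a field, V a finite-dimensional K-vector space, φ : V → V a K-linear endomorphism, and τ a nonzero element of K. Set ψ := id_V − τ·φ and suppose ker ψ ∩ im ψ = 0. Then: (1) ker ψ and im ψ are φ-stable and V = ker ψ ⊕ im ψ; (2) φ acts on ker ψ as multiplication by τ^{−1}; (3) the restriction of ψ to im ψ is an automorphism of im ψ, so that det(id − τ·φ|_{im ψ}) ≠ 0; and (4) in the polynomial ring K[t] one has the factorization det(id − t·φ) = (1 − τ^{−1}t)^r · det(id − t·φ|_{im ψ}), where r = dim_K ker ψ and det(id − t·φ) denotes the determinant of the K[t]-linear endomorphism id − t·φ of V ⊗_K K[t]. In particular, τ is a root of the polynomial det(id − t·φ) of multiplicity exactly r = dim_K ker(id − τ·φ). -/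
open Polynomial TensorProduct

lemma aux_det_baseChange {K W : Type*} [Field K] [AddCommGroup W] [Module K W]
    {ι : Type*} [Fintype ι] [DecidableEq ι] (b : Module.Basis ι K W) (f : W →ₗ[K] W) :
    LinearMap.det
        ((LinearMap.id : K[X] ⊗[K] W →ₗ[K[X]] K[X] ⊗[K] W)
          - (X : K[X]) • LinearMap.baseChange K[X] f) =
      Matrix.det ((1 : Matrix ι ι K[X])
        - (X : K[X]) • (LinearMap.toMatrix b b f).map (algebraMap K K[X])) := by
  rw [← LinearMap.det_toMatrix (Algebra.TensorProduct.basis K[X] b)]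
  congr 1
  rw [_root_.map_sub (LinearMap.toMatrix (Algebra.TensorProduct.basis K[X] b)
      (Algebra.TensorProduct.basis K[X] b)),
    _root_.map_smul (LinearMap.toMatrix (Algebra.TensorProduct.basis K[X] b)
      (Algebra.TensorProduct.basis K[X] b)),
    LinearMap.toMatrix_baseChange, LinearMap.toMatrix_id]

lemma aux_toMatrix_map {K V W : Type*} [Field K] [AddCommGroup V] [Module K V]
    [AddCommGroup W] [Module K W] {ι : Type*} [Fintype ι] [DecidableEq ι]
    (b : Module.Basis ι K W) (e : W ≃ₗ[K] V) (f : V →ₗ[K] V) :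
    LinearMap.toMatrix (b.map e) (b.map e) f
      = LinearMap.toMatrix b b (e.symm.toLinearMap ∘ₗ f ∘ₗ e.toLinearMap) := by
  ext i j
  simp [LinearMap.toMatrix_apply, Module.Basis.map_apply]

set_option maxHeartbeats 1000000 in
set_option synthInstance.maxHeartbeats 200000 in
/-- Let `φ` be an endomorphism of a finite-dimensional `K`-vector space `V`, `τ ∈ K`
nonzero and `ψ := id - τ • φ`, with `ker ψ ∩ im ψ = 0`.  Then `ker ψ` and `im ψ` are
`φ`-stable with `V = ker ψ ⊕ im ψ`; `φ` acts on `ker ψ` as `τ⁻¹`; `ψ` restricts to an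
automorphism of `im ψ` (so `det(id - τ·φ|_{im ψ}) ≠ 0`); and the reverse characteristic
polynomial factors as
`det(id - t·φ) = (1 - τ⁻¹ t)^r · det(id - t·φ|_{im ψ})` with `r = dim ker ψ`, so that
`τ` is a root of `det(id - t·φ)` of multiplicity exactly `r`. -/
theorem stmt_8 {K V : Type*} [Field K] [AddCommGroup V] [Module K V]
    [FiniteDimensional K V] (φ : V →ₗ[K] V) (τ : K) (hτ : τ ≠ 0)
    (ψ : V →ₗ[K] V) (hψ : ψ = LinearMap.id - τ • φ)
    (hdisj : Disjoint (LinearMap.ker ψ) (LinearMap.range ψ)) :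
    (∀ x ∈ LinearMap.ker ψ, φ x ∈ LinearMap.ker ψ) ∧
    (∀ x ∈ LinearMap.range ψ, φ x ∈ LinearMap.range ψ) ∧
    IsCompl (LinearMap.ker ψ) (LinearMap.range ψ) ∧
    (∀ x ∈ LinearMap.ker ψ, φ x = τ⁻¹ • x) ∧
    ∀ (hst : ∀ x ∈ LinearMap.range ψ, φ x ∈ LinearMap.range ψ)
      (hstψ : ∀ x ∈ LinearMap.range ψ, ψ x ∈ LinearMap.range ψ),
      Function.Bijective (ψ.restrict hstψ) ∧
      LinearMap.det (LinearMap.id - τ • φ.restrict hst) ≠ 0 ∧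
      LinearMap.det
          ((LinearMap.id : K[X] ⊗[K] V →ₗ[K[X]] K[X] ⊗[K] V)
            - (X : K[X]) • LinearMap.baseChange K[X] φ) =
        (1 - C τ⁻¹ * X) ^ (Module.finrank K (LinearMap.ker ψ)) *
          LinearMap.det
            ((LinearMap.id :
                K[X] ⊗[K] ↥(LinearMap.range ψ) →ₗ[K[X]] K[X] ⊗[K] ↥(LinearMap.range ψ))
              - (X : K[X]) • LinearMap.baseChange K[X] (φ.restrict hst)) ∧
      Polynomial.rootMultiplicity τ
          (LinearMap.det
            ((LinearMap.id : K[X] ⊗[K] V →ₗ[K[X]] K[X] ⊗[K] V)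
              - (X : K[X]) • LinearMap.baseChange K[X] φ)) =
        Module.finrank K (LinearMap.ker ψ) := by
  have hcomm : ∀ v, ψ (φ v) = φ (ψ v) := by
    intro v
    simp [hψ, LinearMap.sub_apply, LinearMap.smul_apply, map_sub, map_smul]
  have hker : ∀ x ∈ LinearMap.ker ψ, φ x ∈ LinearMap.ker ψ := by
    intro x hx
    simp only [LinearMap.mem_ker] at hx ⊢
    rw [hcomm, hx, map_zero]
  have hrange : ∀ x ∈ LinearMap.range ψ, φ x ∈ LinearMap.range ψ := by
    rintro x ⟨y, rfl⟩
    exact ⟨φ y, hcomm y⟩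
  have hact : ∀ x ∈ LinearMap.ker ψ, φ x = τ⁻¹ • x := by
    intro x hx
    simp only [LinearMap.mem_ker, hψ, LinearMap.sub_apply, LinearMap.id_apply,
      LinearMap.smul_apply, sub_eq_zero] at hx
    conv_rhs => rw [hx]
    rw [smul_smul, inv_mul_cancel₀ hτ, one_smul]
  have hcompl : IsCompl (LinearMap.ker ψ) (LinearMap.range ψ) := by
    refine ⟨hdisj, codisjoint_iff.mpr ?_⟩
    apply Submodule.eq_top_of_finrank_eq
    have h1 := Submodule.finrank_sup_add_finrank_inf_eq (LinearMap.ker ψ) (LinearMap.range ψ)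
    rw [hdisj.eq_bot, finrank_bot, add_zero] at h1
    rw [h1, add_comm, LinearMap.finrank_range_add_finrank_ker]
  have key : ∀ (hst : ∀ x ∈ LinearMap.range ψ, φ x ∈ LinearMap.range ψ)
      (hstψ : ∀ x ∈ LinearMap.range ψ, ψ x ∈ LinearMap.range ψ),
      Function.Bijective (ψ.restrict hstψ) ∧
      LinearMap.det (LinearMap.id - τ • φ.restrict hst) ≠ 0 := by
    intro hst hstψ
    have hinj : Function.Injective (ψ.restrict hstψ) := by
      rw [← LinearMap.ker_eq_bot, Submodule.eq_bot_iff]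
      rintro ⟨x, hx⟩ h
      rw [LinearMap.mem_ker] at h
      have hx0 : ψ x = 0 := congrArg Subtype.val h
      have : x = 0 := Submodule.disjoint_def.mp hdisj x (LinearMap.mem_ker.mpr hx0) hx
      exact Subtype.ext this
    have hbij : Function.Bijective (ψ.restrict hstψ) :=
      ⟨hinj, (LinearMap.injective_iff_surjective).mp hinj⟩
    refine ⟨hbij, ?_⟩
    have heq : LinearMap.id - τ • φ.restrict hst = ψ.restrict hstψ := by
      ext x
      simp [hψ, LinearMap.restrict_apply]
    rw [heq]
    exact (LinearEquiv.isUnit_det' (LinearEquiv.ofBijective _ hbij)).ne_zero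
  have hdetfact : ∀ (hst : ∀ x ∈ LinearMap.range ψ, φ x ∈ LinearMap.range ψ),
      LinearMap.det ((LinearMap.id : K[X] ⊗[K] V →ₗ[K[X]] K[X] ⊗[K] V)
          - (X : K[X]) • LinearMap.baseChange K[X] φ) =
        (1 - C τ⁻¹ * X) ^ (Module.finrank K (LinearMap.ker ψ)) *
          LinearMap.det ((LinearMap.id :
              K[X] ⊗[K] ↥(LinearMap.range ψ) →ₗ[K[X]] K[X] ⊗[K] ↥(LinearMap.range ψ))
              - (X : K[X]) • LinearMap.baseChange K[X] (φ.restrict hst)) := by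
    intro hst
    classical
    set p := LinearMap.ker ψ with hp
    set q := LinearMap.range ψ with hq
    let e : (p × q) ≃ₗ[K] V := Submodule.prodEquivOfIsCompl p q hcompl
    let bk := Module.finBasis K p
    let br := Module.finBasis K q
    have hφk : φ.restrict hker = (τ⁻¹ : K) • (LinearMap.id : p →ₗ[K] p) := by
      ext x
      simp [LinearMap.restrict_apply, hact x.1 x.2]
    have h2 : e.toLinearMap ∘ₗ ((φ.restrict hker).prodMap (φ.restrict hst))
        = φ ∘ₗ e.toLinearMap := by
      apply LinearMap.ext
      rintro ⟨x, y⟩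
      simp [e, Submodule.coe_prodEquivOfIsCompl', LinearMap.restrict_apply]
    have hconj : e.symm.toLinearMap ∘ₗ φ ∘ₗ e.toLinearMap
        = (φ.restrict hker).prodMap (φ.restrict hst) :=
      ((LinearEquiv.eq_toLinearMap_symm_comp _ _).mpr h2).symm
    have hM : LinearMap.toMatrix ((bk.prod br).map e) ((bk.prod br).map e) φ
        = Matrix.fromBlocks (LinearMap.toMatrix bk bk (φ.restrict hker)) 0 0
            (LinearMap.toMatrix br br (φ.restrict hst)) := by
      rw [aux_toMatrix_map, hconj, LinearMap.toMatrix_prodMap]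
    have hA : LinearMap.toMatrix bk bk (φ.restrict hker)
        = (τ⁻¹ : K) • (1 : Matrix _ _ K) := by
      rw [hφk, _root_.map_smul, LinearMap.toMatrix_id]
    rw [aux_det_baseChange ((bk.prod br).map e) φ,
      aux_det_baseChange br (φ.restrict hst), hM, hA]
    set D := LinearMap.toMatrix br br (φ.restrict hst) with hD
    have hblock : (1 : Matrix (Fin (Module.finrank K ↥p) ⊕ Fin (Module.finrank K ↥q))
          (Fin (Module.finrank K ↥p) ⊕ Fin (Module.finrank K ↥q)) K[X])
        - (X : K[X]) • (Matrix.fromBlocks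
            ((τ⁻¹ : K) • (1 : Matrix (Fin (Module.finrank K ↥p)) (Fin (Module.finrank K ↥p)) K))
            0 0 D).map (algebraMap K K[X])
        = Matrix.fromBlocks
            ((1 - C τ⁻¹ * X) • (1 : Matrix (Fin (Module.finrank K ↥p))
              (Fin (Module.finrank K ↥p)) K[X])) 0 0
            ((1 : Matrix (Fin (Module.finrank K ↥q)) (Fin (Module.finrank K ↥q)) K[X])
              - (X : K[X]) • D.map (algebraMap K K[X])) := by
      have hsub : ∀ (A A' : Matrix (Fin (Module.finrank K ↥p)) (Fin (Module.finrank K ↥p)) K[X])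
          (B B' : Matrix (Fin (Module.finrank K ↥q)) (Fin (Module.finrank K ↥q)) K[X]),
          Matrix.fromBlocks A 0 0 B - Matrix.fromBlocks A' 0 0 B'
            = Matrix.fromBlocks (A - A') 0 0 (B - B') := by
        intro A A' B B'
        rw [sub_eq_add_neg, Matrix.fromBlocks_neg, Matrix.fromBlocks_add]
        simp [← sub_eq_add_neg]
      have hleft : (1 : Matrix (Fin (Module.finrank K ↥p)) (Fin (Module.finrank K ↥p)) K[X])
          - (X : K[X]) • (((τ⁻¹ : K) • (1 : Matrix (Fin (Module.finrank K ↥p))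
              (Fin (Module.finrank K ↥p)) K)).map (algebraMap K K[X]))
          = (1 - C τ⁻¹ * X) • 1 := by
        apply Matrix.ext
        intro i j
        by_cases h : i = j
        · subst h
          simp only [Matrix.sub_apply, Matrix.smul_apply, Matrix.map_apply, Matrix.one_apply_eq,
            smul_eq_mul, mul_one, Polynomial.algebraMap_eq]
          ring
        · simp [Matrix.smul_apply, Matrix.map_apply, Matrix.one_apply_ne h, h]
      rw [Matrix.fromBlocks_map, Matrix.fromBlocks_smul, ← Matrix.fromBlocks_one]
      simp only [Matrix.map_zero _ (map_zero _), smul_zero]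
      rw [hsub, hleft]
    rw [hblock, Matrix.det_fromBlocks_zero₁₂, Matrix.det_smul, Matrix.det_one, mul_one,
      Fintype.card_fin]
  have heval : ∀ (hst : ∀ x ∈ LinearMap.range ψ, φ x ∈ LinearMap.range ψ),
      Polynomial.eval τ (LinearMap.det ((LinearMap.id :
          K[X] ⊗[K] ↥(LinearMap.range ψ) →ₗ[K[X]] K[X] ⊗[K] ↥(LinearMap.range ψ))
          - (X : K[X]) • LinearMap.baseChange K[X] (φ.restrict hst)))
        = LinearMap.det (LinearMap.id - τ • φ.restrict hst) := by
    intro hst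
    classical
    set b := Module.finBasis K ↥(LinearMap.range ψ) with hb
    set D := LinearMap.toMatrix b b (φ.restrict hst) with hD
    rw [aux_det_baseChange b (φ.restrict hst), ← LinearMap.det_toMatrix b,
      _root_.map_sub (LinearMap.toMatrix b b), _root_.map_smul (LinearMap.toMatrix b b),
      LinearMap.toMatrix_id, ← hD]
    have hER : Polynomial.eval τ (Matrix.det ((1 : Matrix _ _ K[X])
          - (X : K[X]) • D.map (algebraMap K K[X])))
        = Matrix.det (((1 : Matrix _ _ K[X])
          - (X : K[X]) • D.map (algebraMap K K[X])).map (Polynomial.evalRingHom τ)) := by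
      rw [← Polynomial.coe_evalRingHom, RingHom.map_det, RingHom.mapMatrix_apply]
    rw [hER]
    congr 1
    apply Matrix.ext
    intro i j
    by_cases h : i = j
    · subst h
      simp [Matrix.map_apply, Matrix.one_apply_eq, Polynomial.algebraMap_eq]
      ring
    · simp [Matrix.map_apply, Matrix.one_apply_ne h, h]
      ring
  refine ⟨hker, hrange, hcompl, hact, ?_⟩
  intro hst hstψ
  obtain ⟨hbij, hdet0⟩ := key hst hstψ
  refine ⟨hbij, hdet0, hdetfact hst, ?_⟩
  rw [hdetfact hst]
  set r := Module.finrank K (LinearMap.ker ψ) with hr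
  set g := LinearMap.det ((LinearMap.id :
      K[X] ⊗[K] ↥(LinearMap.range ψ) →ₗ[K[X]] K[X] ⊗[K] ↥(LinearMap.range ψ))
      - (X : K[X]) • LinearMap.baseChange K[X] (φ.restrict hst)) with hg
  have hg0 : Polynomial.eval τ g ≠ 0 := by
    rw [hg, heval hst]
    exact hdet0
  have hLeq : (1 - C τ⁻¹ * X : K[X]) = C (-τ⁻¹) * (X - C τ) := by
    have h1 : (C τ⁻¹ * C τ : K[X]) = 1 := by
      rw [← C_mul, inv_mul_cancel₀ hτ, map_one]
    rw [map_neg]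
    linear_combination (-1 : K[X]) * h1
  have hgne : Polynomial.eval τ ((C (-τ⁻¹)) ^ r * g) ≠ 0 := by
    simp only [eval_mul, eval_pow, eval_C]
    exact mul_ne_zero (pow_ne_zero _ (neg_ne_zero.mpr (inv_ne_zero hτ))) hg0
  have hne : (C (-τ⁻¹)) ^ r * g ≠ 0 := by
    intro h0
    rw [h0, eval_zero] at hgne
    exact hgne rfl
  rw [hLeq, mul_pow, mul_right_comm, Polynomial.rootMultiplicity_mul_X_sub_C_pow hne,
    Polynomial.rootMultiplicity_eq_zero hgne, zero_add]
end
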